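/- Let n ≥ 1 and let u : ℝⁿ → ℝ be three times continuously differentiable. For x ∈ ℝⁿ let D²u(x) denote the Hessian matrix of u at x (with entries the second partial derivatives ∂²u/∂xᵢ∂xⱼ), let Du(x) denote the gradient of u at x, and let V(x) = (cof D²u(x)) Du(x) be the vector field obtained by applying the cofactor matrix of the Hessian to the gradient. Then for every x ∈ ℝⁿ, det D²u(x) = (1/n) div V(x), where div V(x) = ∑_{i=1}^{n} ∂Vᵢ/∂xᵢ(x). -/

import Mathlib

open Matrix

set_option maxHeartbeats 1000000

/-- The determinant as a continuous multilinear map in the rows. -/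
noncomputable def detCM (n : ℕ) :
    ContinuousMultilinearMap ℝ (fun _ : Fin n => (Fin n → ℝ)) ℝ :=
  MultilinearMap.mkContinuous (Matrix.detRowAlternating (n := Fin n) (R := ℝ)).toMultilinearMap
    (n.factorial) (by
      intro m
      have : (Matrix.detRowAlternating (n := Fin n) (R := ℝ)).toMultilinearMap m
          = Matrix.det (Matrix.of m) := rfl
      rw [this, Matrix.det_apply]
      calc ‖∑ σ : Equiv.Perm (Fin n), Equiv.Perm.sign σ • ∏ i, Matrix.of m (σ i) i‖
          ≤ ∑ σ : Equiv.Perm (Fin n), ‖Equiv.Perm.sign σ • ∏ i, Matrix.of m (σ i) i‖ :=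
            norm_sum_le _ _
        _ ≤ ∑ _σ : Equiv.Perm (Fin n), ∏ i, ‖m i‖ := by
            refine Finset.sum_le_sum fun σ _ => ?_
            have h1 : ‖Equiv.Perm.sign σ • ∏ i, Matrix.of m (σ i) i‖
                = ‖∏ i, m (σ i) i‖ := by
              rcases Int.units_eq_one_or (Equiv.Perm.sign σ) with h | h <;>
                simp [h, Matrix.of_apply]
            rw [h1]
            calc ‖∏ i, m (σ i) i‖ = ∏ i, ‖m (σ i) i‖ := by
                  rw [Real.norm_eq_abs, Finset.abs_prod]
                  exact Finset.prod_congr rfl fun i _ => (Real.norm_eq_abs _).symm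
              _ ≤ ∏ i, ‖m (σ i)‖ := by
                  refine Finset.prod_le_prod (fun i _ => norm_nonneg _) fun i _ => ?_
                  exact norm_le_pi_norm (m (σ i)) i
              _ = ∏ i, ‖m i‖ := Equiv.prod_comp σ (fun i => ‖m i‖)
        _ = (n.factorial : ℝ) * ∏ i, ‖m i‖ := by
            rw [Finset.sum_const, Finset.card_univ, Fintype.card_perm, Fintype.card_fin,
              nsmul_eq_mul])

lemma detCM_apply (n : ℕ) (m : Fin n → Fin n → ℝ) :
    detCM n m = Matrix.det (Matrix.of m) := rfl

/-- Divergence form of the Monge–Ampère operator: for a `C³` function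
`u : ℝⁿ → ℝ` with gradient `Du`, Hessian matrix `Hess`, and vector field
`V = (cof Hess) Du` (cofactor matrix of the Hessian applied to the gradient),
one has `det D²u(x) = (1/n) div V(x)`. -/
theorem det_hessian_eq_inv_n_mul_div
    (n : ℕ) (hn : 1 ≤ n) (u : EuclideanSpace ℝ (Fin n) → ℝ)
    (hu : ContDiff ℝ 3 u)
    (Du : EuclideanSpace ℝ (Fin n) → Fin n → ℝ)
    (hDu : ∀ x i, Du x i = fderiv ℝ u x (EuclideanSpace.single i 1))
    (Hess : EuclideanSpace ℝ (Fin n) → Matrix (Fin n) (Fin n) ℝ)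
    (hHess : ∀ x i j, Hess x i j =
      fderiv ℝ (fun y => fderiv ℝ u y (EuclideanSpace.single j 1)) x
        (EuclideanSpace.single i 1))
    (V : EuclideanSpace ℝ (Fin n) → Fin n → ℝ)
    (hV : ∀ x i, V x i = ∑ j : Fin n, ((Hess x).adjugate)ᵀ i j * Du x j)
    (x : EuclideanSpace ℝ (Fin n)) :
    (Hess x).det =
      (1 / (n : ℝ)) *
        ∑ i : Fin n, fderiv ℝ (fun y => V y i) x (EuclideanSpace.single i 1) := by
  classical
  set e : Fin n → EuclideanSpace ℝ (Fin n) := fun i => EuclideanSpace.single i 1 with he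
  -- first partial derivatives
  set du : Fin n → EuclideanSpace ℝ (Fin n) → ℝ := fun j y => fderiv ℝ u y (e j) with hdu
  have hdu_cd : ∀ j, ContDiff ℝ 2 (du j) := by
    intro j
    have h1 : ContDiff ℝ 2 (fderiv ℝ u) := hu.fderiv_right (m := 2) (by norm_num)
    exact h1.clm_apply contDiff_const
  -- rows of the Hessian as functions
  set hess : Fin n → Fin n → EuclideanSpace ℝ (Fin n) → ℝ := fun k j y => fderiv ℝ (du j) y (e k) with hhess
  have hess_eq : ∀ k j, hess k j =
      fun y => (ContinuousLinearMap.apply ℝ ℝ (e k)) (fderiv ℝ (du j) y) := by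
    intro k j; rfl
  have hhess_cd : ∀ k j, ContDiff ℝ 1 (hess k j) := by
    intro k j
    have h1 : ContDiff ℝ 1 (fderiv ℝ (du j)) := (hdu_cd j).fderiv_right (m := 1) (by norm_num)
    exact h1.clm_apply contDiff_const
  have hHess' : ∀ (y : EuclideanSpace ℝ (Fin n)) k j, Hess y k j = hess k j y := fun y k j => hHess y k j
  -- third derivatives
  set T : Fin n → Fin n → Fin n → ℝ := fun i k j => fderiv ℝ (hess k j) x (e i) with hT
  have hTfderiv : ∀ i k j, T i k j = fderiv ℝ (fderiv ℝ (du j)) x (e i) (e k) := by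
    intro i k j
    have hdiff : DifferentiableAt ℝ (fderiv ℝ (du j)) x :=
      (((hdu_cd j).fderiv_right (m := 1) (by norm_num)).differentiable (by norm_num)).differentiableAt
    have hcomp : HasFDerivAt (hess k j)
        ((ContinuousLinearMap.apply ℝ ℝ (e k)).comp (fderiv ℝ (fderiv ℝ (du j)) x)) x := by
      rw [hess_eq]
      exact ((ContinuousLinearMap.apply ℝ ℝ (e k)).hasFDerivAt).comp x hdiff.hasFDerivAt
    rw [hT]
    simp only [hcomp.fderiv, ContinuousLinearMap.coe_comp', Function.comp_apply,
      ContinuousLinearMap.apply_apply]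
  have hTsymm : ∀ i k j, T i k j = T k i j := by
    intro i k j
    have hsymm : IsSymmSndFDerivAt ℝ (du j) x :=
      ((hdu_cd j).contDiffAt).isSymmSndFDerivAt (by norm_num)
    rw [hTfderiv i k j, hTfderiv k i j]
    exact hsymm (e i) (e k)
  -- the gradient as a function into ℝⁿ
  set Duf : EuclideanSpace ℝ (Fin n) → (Fin n → ℝ) := fun y j => du j y with hDuf
  have hDu_eq : ∀ y, Du y = Duf y := by
    intro y; funext j; rw [hDu y j]
  -- derivative data
  have hdu_diff : ∀ j, DifferentiableAt ℝ (du j) x := fun j =>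
    ((hdu_cd j).differentiable (by norm_num)).differentiableAt
  have hhess_diff : ∀ k j, DifferentiableAt ℝ (hess k j) x := fun k j =>
    ((hhess_cd k j).differentiable (by norm_num)).differentiableAt
  have hDuf_deriv : HasFDerivAt Duf
      (ContinuousLinearMap.pi fun j => fderiv ℝ (du j) x) x :=
    hasFDerivAt_pi.2 fun j => (hdu_diff j).hasFDerivAt
  have hHrow_deriv : ∀ k, HasFDerivAt (fun y j => hess k j y)
      (ContinuousLinearMap.pi fun j => fderiv ℝ (hess k j) x) x :=
    fun k => hasFDerivAt_pi.2 fun j => (hhess_diff k j).hasFDerivAt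
  -- key pointwise identity: V y i = det of Hess y with row i replaced by Du y
  have hVdet : ∀ (y : EuclideanSpace ℝ (Fin n)) (i : Fin n),
      V y i = detCM n (Function.update (fun k => (Hess y k : Fin n → ℝ)) i (Duf y)) := by
    intro y i
    have hupd : (Hess y).updateRow i (Duf y)
        = Matrix.of (Function.update (fun k => (Hess y k : Fin n → ℝ)) i (Duf y)) := rfl
    have h1 : V y i = ∑ j : Fin n, Duf y j * ((Hess y).updateRow i (Pi.single j 1)).det := by
      rw [hV y i]
      refine Finset.sum_congr rfl fun j _ => ?_
      rw [Matrix.transpose_apply, Matrix.adjugate_apply, hDu_eq y, mul_comm]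
    have h2 : ((Hess y).updateRow i (Duf y)).det
        = ∑ j : Fin n, Duf y j * ((Hess y).updateRow i (Pi.single j 1)).det := by
      have hv : (Duf y) = ∑ j : Fin n, Pi.single j (Duf y j) := by
        rw [Finset.univ_sum_single]
      calc ((Hess y).updateRow i (Duf y)).det
          = ((Hess y).updateRow i (∑ j : Fin n, Pi.single j (Duf y j))).det := by rw [← hv]
        _ = ∑ j : Fin n, ((Hess y).updateRow i (Pi.single j (Duf y j))).det := by
            have := (Matrix.detRowAlternating (n := Fin n) (R := ℝ)).toMultilinearMap.map_update_sum
              (Finset.univ) i (fun j => (Pi.single j (Duf y j) : Fin n → ℝ)) (Hess y)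
            exact this
        _ = ∑ j : Fin n, Duf y j * ((Hess y).updateRow i (Pi.single j 1)).det := by
            refine Finset.sum_congr rfl fun j _ => ?_
            have : (Pi.single j (Duf y j) : Fin n → ℝ)
                = (Duf y j • (Pi.single j 1 : Fin n → ℝ) : Fin n → ℝ) := by
              funext l
              rcases eq_or_ne l j with rfl | h
              · simp
              · simp [Pi.single_apply, h]
            rw [this, Matrix.det_updateRow_smul]
    rw [h1, ← h2, hupd, detCM_apply]
  -- derivative of each V component
  set Hx : Matrix (Fin n) (Fin n) ℝ := Hess x with hHx
  have key : ∀ i : Fin n,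
      fderiv ℝ (fun y => V y i) x (e i)
        = ∑ k : Fin n, detCM n (Function.update
            (Function.update (fun l => (Hx l : Fin n → ℝ)) i (Duf x)) k
            (if k = i then (Hx i : Fin n → ℝ) else fun j => T i k j)) := by
    intro i
    set g : Fin n → EuclideanSpace ℝ (Fin n) → (Fin n → ℝ) :=
      fun k => if k = i then Duf else fun y j => hess k j y with hg
    set g' : Fin n → (EuclideanSpace ℝ (Fin n) →L[ℝ] (Fin n → ℝ)) :=
      fun k => if k = i then (ContinuousLinearMap.pi fun j => fderiv ℝ (du j) x)
        else (ContinuousLinearMap.pi fun j => fderiv ℝ (hess k j) x) with hg'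
    have hgd : ∀ k, HasFDerivAt (g k) (g' k) x := by
      intro k
      by_cases hk : k = i
      · simp only [hg, hg', if_pos hk]; exact hDuf_deriv
      · simp only [hg, hg', if_neg hk]; exact hHrow_deriv k
    have hVg : (fun y => V y i) = fun y => detCM n (fun k => g k y) := by
      funext y
      rw [hVdet y i]
      congr 1
      funext k
      by_cases hk : k = i
      · subst hk; simp [hg, Function.update_self]
      · simp only [hg, if_neg hk, Function.update_of_ne hk]
        funext j; exact hHess' y k j
    have hDV : HasFDerivAt (fun y => V y i)
        ((∑ k : Fin n, ((detCM n).toContinuousLinearMap (fun l => g l x) k) ∘L (g' k))) x := by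
      rw [hVg]
      exact HasFDerivAt.multilinear_comp (detCM n) hgd
    rw [hDV.fderiv]
    rw [ContinuousLinearMap.sum_apply]
    refine Finset.sum_congr rfl fun k _ => ?_
    have hglx : (fun l => g l x) = Function.update (fun l => (Hx l : Fin n → ℝ)) i (Duf x) := by
      funext l
      by_cases hl : l = i
      · subst hl; simp [hg, Function.update_self]
      · simp only [hg, if_neg hl, Function.update_of_ne hl]
        funext j; exact (hHess' x l j).symm
    have hg'k : g' k (e i) = (if k = i then (Hx i : Fin n → ℝ) else fun j => T i k j) := by
      by_cases hk : k = i
      · subst hk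
        simp only [hg', if_pos rfl]
        funext j
        simp only [ContinuousLinearMap.pi_apply]
        exact (hHess' x k j).symm
      · simp only [hg', if_neg hk, if_neg hk]
        funext j
        simp only [ContinuousLinearMap.pi_apply]
        rfl
    simp only [ContinuousLinearMap.coe_comp', Function.comp_apply,
      ContinuousMultilinearMap.toContinuousLinearMap_apply, hglx, hg'k]
  -- evaluate diagonal and off-diagonal contributions
  set W : Fin n → (Fin n → (Fin n → ℝ)) :=
    fun i => Function.update (fun l => (Hx l : Fin n → ℝ)) i (Duf x) with hW
  set Q : Fin n → Fin n → ℝ := fun i k =>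
    if k = i then 0 else detCM n (Function.update (W i) k (fun j => T i k j)) with hQ
  have hterm : ∀ i k : Fin n,
      detCM n (Function.update (W i) k
        (if k = i then (Hx i : Fin n → ℝ) else fun j => T i k j))
      = (if k = i then Hx.det else 0) + Q i k := by
    intro i k
    by_cases hk : k = i
    · subst hk
      simp only [hQ, eq_self_iff_true, if_true, add_zero]
      have : Function.update (W k) k (Hx k : Fin n → ℝ)
          = fun l => (Hx l : Fin n → ℝ) := by
        rw [hW]
        rw [Function.update_idem]
        exact Function.update_eq_self _ _
      rw [this, detCM_apply]
      rfl
    · simp only [hQ, if_neg hk, zero_add]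
  have hQanti : ∀ i k : Fin n, Q i k = -Q k i := by
    intro i k
    by_cases hk : k = i
    · subst hk; simp [hQ]
    · have hk' : i ≠ k := fun h => hk h.symm
      simp only [hQ, if_neg hk, if_neg hk']
      have hswap : Function.update (W k) i (fun j => T i k j)
          = (Function.update (W i) k (fun j => T i k j)) ∘ (Equiv.swap i k) := by
        funext l
        simp only [Function.comp_apply, Equiv.swap_apply_def, hW, Function.update_apply]
        split_ifs <;> simp_all
      have hdet : detCM n ((Function.update (W i) k (fun j => T i k j)) ∘ (Equiv.swap i k))
          = - detCM n (Function.update (W i) k (fun j => T i k j)) := by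
        have := (Matrix.detRowAlternating (n := Fin n) (R := ℝ)).map_swap
          (Function.update (W i) k (fun j => T i k j)) hk'
        exact this
      have hTik : (fun j => T k i j) = fun j => T i k j :=
        funext fun j => hTsymm k i j
      rw [hTik, hswap, hdet, neg_neg]
  have hQsum : ∑ i : Fin n, ∑ k : Fin n, Q i k = 0 := by
    have h1 : ∑ i : Fin n, ∑ k : Fin n, Q i k = ∑ k : Fin n, ∑ i : Fin n, Q i k :=
      Finset.sum_comm
    have h2 : ∑ k : Fin n, ∑ i : Fin n, Q i k
        = -∑ i : Fin n, ∑ k : Fin n, Q i k := by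
      rw [← Finset.sum_neg_distrib]
      refine Finset.sum_congr rfl fun k _ => ?_
      rw [← Finset.sum_neg_distrib]
      exact Finset.sum_congr rfl fun i _ => hQanti i k
    have := h1.trans h2
    linarith
  -- put everything together
  have hsum : ∑ i : Fin n, fderiv ℝ (fun y => V y i) x (e i) = (n : ℝ) * Hx.det := by
    calc ∑ i : Fin n, fderiv ℝ (fun y => V y i) x (e i)
        = ∑ i : Fin n, ∑ k : Fin n, ((if k = i then Hx.det else 0) + Q i k) := by
          refine Finset.sum_congr rfl fun i _ => ?_
          rw [key i]
          exact Finset.sum_congr rfl fun k _ => hterm i k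
      _ = ∑ i : Fin n, (Hx.det + ∑ k : Fin n, Q i k) := by
          refine Finset.sum_congr rfl fun i _ => ?_
          rw [Finset.sum_add_distrib]
          congr 1
          simp
      _ = (n : ℝ) * Hx.det := by
          rw [Finset.sum_add_distrib, hQsum, add_zero, Finset.sum_const,
            Finset.card_univ, Fintype.card_fin, nsmul_eq_mul]
  have hn' : (n : ℝ) ≠ 0 := by positivity
  have hsum' : ∑ i : Fin n, fderiv ℝ (fun y => V y i) x (EuclideanSpace.single i 1)
      = (n : ℝ) * Hx.det := hsum
  rw [hsum']
  field_simp
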